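/- Let η : [0,1] → A be continuous and let g : [0,1] → A be a based gauge transformation, i.e. a C¹ map with g(θ) invertible for every θ and g(0) = 1. Then the horizontal path of the gauge-transformed connection (g·η)(θ) := g(θ)⁻¹ η(θ) g(θ) + g(θ)⁻¹ g'(θ) is given by Ψ_{g·η}(θ) = g(θ)⁻¹ · Ψ_η(θ) for all θ ∈ [0,1]. -/

import Mathlib

open Set

/-- If `g : [0,1] → A` is a based gauge transformation (C¹, pointwise invertible,
`g(0) = 1`), then the horizontal path of the gauge-transformed connection
`(g·η)(θ) = g(θ)⁻¹ η(θ) g(θ) + g(θ)⁻¹ g'(θ)` is `θ ↦ g(θ)⁻¹ · Ψ_η(θ)`. -/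
theorem stmt_2 {A : Type*} [NormedRing A] [NormedAlgebra ℝ A] [NormOneClass A]
    [CompleteSpace A] (η Ψ g Dg Ψ' : ℝ → A) (hη : ContinuousOn η (Icc 0 1))
    -- Ψ is the horizontal path of η
    (hΨ : ∀ θ ∈ Icc (0:ℝ) 1, HasDerivWithinAt Ψ (-(η θ * Ψ θ)) (Icc (0:ℝ) 1) θ)
    (hΨ0 : Ψ 0 = 1)
    -- g is a based gauge transformation with derivative Dg
    (hg : ∀ θ ∈ Icc (0:ℝ) 1, HasDerivWithinAt g (Dg θ) (Icc (0:ℝ) 1) θ)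
    (hDg : ContinuousOn Dg (Icc 0 1))
    (hginv : ∀ θ ∈ Icc (0:ℝ) 1, IsUnit (g θ))
    (hg0 : g 0 = 1)
    -- Ψ' is the horizontal path of the gauge-transformed connection g·η
    (hΨ' : ∀ θ ∈ Icc (0:ℝ) 1, HasDerivWithinAt Ψ'
      (-((Ring.inverse (g θ) * η θ * g θ + Ring.inverse (g θ) * Dg θ) * Ψ' θ))
      (Icc (0:ℝ) 1) θ)
    (hΨ'0 : Ψ' 0 = 1) :
    ∀ θ ∈ Icc (0:ℝ) 1, Ψ' θ = Ring.inverse (g θ) * Ψ θ := by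
  set φ : ℝ → A := fun θ => g θ * Ψ' θ with hφdef
  -- φ satisfies the same ODE as Ψ
  have hφ : ∀ θ ∈ Icc (0:ℝ) 1, HasDerivWithinAt φ (-(η θ * φ θ)) (Icc (0:ℝ) 1) θ := by
    intro θ hθ
    have h := (hg θ hθ).mul (hΨ' θ hθ)
    convert h using 1
    · rfl
    have hu := hginv θ hθ
    have h1 : g θ * Ring.inverse (g θ) = 1 := Ring.mul_inverse_cancel _ hu
    simp only [hφdef]
    have e1 : g θ * ((Ring.inverse (g θ) * η θ * g θ + Ring.inverse (g θ) * Dg θ) * Ψ' θ)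
        = η θ * (g θ * Ψ' θ) + Dg θ * Ψ' θ := by
      rw [add_mul, mul_add]
      congr 1
      · rw [← mul_assoc, ← mul_assoc, ← mul_assoc, h1, one_mul, mul_assoc]
      · rw [← mul_assoc, ← mul_assoc, h1, one_mul]
    rw [mul_neg, e1]
    abel
  obtain ⟨C, hC⟩ : ∃ C, ∀ x ∈ Icc (0:ℝ) 1, ‖η x‖ ≤ C :=
    isCompact_Icc.exists_bound_of_continuousOn hη
  have hC0 : 0 ≤ C := le_trans (norm_nonneg _) (hC 0 ⟨le_refl _, zero_le_one⟩)
  set v : ℝ → A → A := fun t x => -((η (projIcc 0 1 zero_le_one t) : A) * x) with hvdef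
  have hlip : ∀ t, LipschitzWith C.toNNReal (v t) := by
    intro t
    apply LipschitzWith.of_dist_le_mul
    intro x y
    rw [dist_eq_norm]
    have hsub : v t x - v t y = η (projIcc 0 1 zero_le_one t) * (y - x) := by
      simp only [hvdef, mul_sub]
      abel
    rw [hsub]
    calc ‖(η (projIcc 0 1 zero_le_one t) : A) * (y - x)‖
        ≤ ‖(η (projIcc 0 1 zero_le_one t) : A)‖ * ‖y - x‖ := norm_mul_le _ _
      _ ≤ C.toNNReal * ‖y - x‖ := by
          apply mul_le_mul_of_nonneg_right _ (norm_nonneg _)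
          rw [Real.coe_toNNReal _ hC0]
          exact hC _ (projIcc _ _ _ t).2
      _ = C.toNNReal * dist x y := by rw [dist_eq_norm, norm_sub_rev]
  have hIcc : ∀ t ∈ Ico (0:ℝ) 1, Icc (0:ℝ) 1 ∈ nhdsWithin t (Ici t) := by
    intro t ht
    apply mem_nhdsWithin.mpr
    exact ⟨Iio 1, isOpen_Iio, ht.2, fun x hx => ⟨le_trans ht.1 hx.2, le_of_lt hx.1⟩⟩
  have key : EqOn φ Ψ (Icc 0 1) := by
    apply ODE_solution_unique (v := v) hlip
    · exact fun t ht => (hφ t ht).continuousWithinAt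
    · intro t ht
      rw [show v t (φ t) = -(η t * φ t) by
        simp [hvdef, projIcc_of_mem zero_le_one (Ico_subset_Icc_self ht)]]
      exact (hφ t (Ico_subset_Icc_self ht)).mono_of_mem_nhdsWithin (hIcc t ht)
    · exact fun t ht => (hΨ t ht).continuousWithinAt
    · intro t ht
      rw [show v t (Ψ t) = -(η t * Ψ t) by
        simp [hvdef, projIcc_of_mem zero_le_one (Ico_subset_Icc_self ht)]]
      exact (hΨ t (Ico_subset_Icc_self ht)).mono_of_mem_nhdsWithin (hIcc t ht)
    · simp [hφdef, hg0, hΨ'0, hΨ0]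
  intro θ hθ
  have h2 : g θ * Ψ' θ = Ψ θ := key hθ
  have hu := hginv θ hθ
  have h3 : Ring.inverse (g θ) * (g θ * Ψ' θ) = Ring.inverse (g θ) * Ψ θ := by rw [h2]
  rwa [← mul_assoc, Ring.inverse_mul_cancel _ hu, one_mul] at h3
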